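/- For every λ ∈ (−1,1) and every x ∈ ℝ, the function F is differentiable at x with derivative F'(x) = 2·(1 − λ·cos(πx))/(1 − 2λ·cos(πx) + λ²), and F'(x) > 1. In particular F is a strictly increasing diffeomorphism of ℝ with derivative bounded below by a constant greater than 1. -/

import Mathlib

/-- For λ ∈ (−1,1), the map F(x) = 2x + 1 + (2/π)·arctan(λ·sin(πx)/(1 − λ·cos(πx))) is
differentiable at every x with F'(x) = 2·(1 − λ·cos(πx))/(1 − 2λ·cos(πx) + λ²) > 1; in
particular F is a strictly increasing diffeomorphism of ℝ (strictly monotone and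
bijective) with derivative bounded below by a constant greater than 1. -/
theorem lift_expanding (lam : ℝ) (hlam : lam ∈ Set.Ioo (-1 : ℝ) 1) :
    (∀ x : ℝ,
      HasDerivAt (fun y : ℝ => 2 * y + 1 + (2 / Real.pi) *
          Real.arctan (lam * Real.sin (Real.pi * y) / (1 - lam * Real.cos (Real.pi * y))))
        (2 * (1 - lam * Real.cos (Real.pi * x)) /
          (1 - 2 * lam * Real.cos (Real.pi * x) + lam ^ 2)) x ∧
      1 < 2 * (1 - lam * Real.cos (Real.pi * x)) /
          (1 - 2 * lam * Real.cos (Real.pi * x) + lam ^ 2)) ∧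
    StrictMono (fun y : ℝ => 2 * y + 1 + (2 / Real.pi) *
        Real.arctan (lam * Real.sin (Real.pi * y) / (1 - lam * Real.cos (Real.pi * y)))) ∧
    Function.Bijective (fun y : ℝ => 2 * y + 1 + (2 / Real.pi) *
        Real.arctan (lam * Real.sin (Real.pi * y) / (1 - lam * Real.cos (Real.pi * y)))) ∧
    ∃ c : ℝ, 1 < c ∧ ∀ x : ℝ,
      c ≤ 2 * (1 - lam * Real.cos (Real.pi * x)) /
          (1 - 2 * lam * Real.cos (Real.pi * x) + lam ^ 2) := by
  obtain ⟨h1, h2⟩ := hlam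
  have hπ : (0:ℝ) < Real.pi := Real.pi_pos
  have habs : |lam| < 1 := abs_lt.mpr ⟨h1, h2⟩
  have habs0 : (0:ℝ) ≤ |lam| := abs_nonneg lam
  have hsq : lam ^ 2 = |lam| ^ 2 := (sq_abs lam).symm
  -- bounds on lam * cos
  have hmc : ∀ x : ℝ, |lam * Real.cos (Real.pi * x)| ≤ |lam| := by
    intro x
    rw [abs_mul]
    calc |lam| * |Real.cos (Real.pi * x)| ≤ |lam| * 1 :=
          mul_le_mul_of_nonneg_left (Real.abs_cos_le_one _) habs0
      _ = |lam| := mul_one _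
  have hvpos : ∀ x : ℝ, 0 < 1 - lam * Real.cos (Real.pi * x) := by
    intro x
    have := (abs_le.mp (hmc x)).2
    linarith
  have hDpos : ∀ x : ℝ, 0 < 1 - 2 * lam * Real.cos (Real.pi * x) + lam ^ 2 := by
    intro x
    have := (abs_le.mp (hmc x)).2
    nlinarith [sq_nonneg (1 - |lam|)]
  have hDle : ∀ x : ℝ, 1 - 2 * lam * Real.cos (Real.pi * x) + lam ^ 2 ≤ (1 + |lam|) ^ 2 := by
    intro x
    have := (abs_le.mp (hmc x)).1
    nlinarith
  -- the derivative
  have key : ∀ x : ℝ, HasDerivAt (fun y : ℝ => 2 * y + 1 + (2 / Real.pi) *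
      Real.arctan (lam * Real.sin (Real.pi * y) / (1 - lam * Real.cos (Real.pi * y))))
      (2 * (1 - lam * Real.cos (Real.pi * x)) /
        (1 - 2 * lam * Real.cos (Real.pi * x) + lam ^ 2)) x := by
    intro x
    have hπx : HasDerivAt (fun y : ℝ => Real.pi * y) Real.pi x := by
      simpa using (hasDerivAt_id x).const_mul Real.pi
    have hu : HasDerivAt (fun y : ℝ => lam * Real.sin (Real.pi * y))
        (lam * (Real.cos (Real.pi * x) * Real.pi)) x := (hπx.sin).const_mul lam
    have hv : HasDerivAt (fun y : ℝ => 1 - lam * Real.cos (Real.pi * y))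
        (0 - lam * (-Real.sin (Real.pi * x) * Real.pi)) x :=
      (hasDerivAt_const x (1:ℝ)).sub ((hπx.cos).const_mul lam)
    have hq := (hu.div hv (ne_of_gt (hvpos x))).arctan
    have htot := (((hasDerivAt_id x).const_mul (2:ℝ)).add_const (1:ℝ)).add
      (hq.const_mul (2 / Real.pi))
    convert htot using 1
    case e'_4 => rfl
    case e'_5 => rfl
    case e'_8 => rfl
    have hD := hDpos x
    have hV := hvpos x
    have hpyth : Real.sin (Real.pi * x) ^ 2 + Real.cos (Real.pi * x) ^ 2 = 1 :=
      Real.sin_sq_add_cos_sq _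
    have hnum : lam * (Real.cos (Real.pi * x) * Real.pi) * (1 - lam * Real.cos (Real.pi * x)) -
        lam * Real.sin (Real.pi * x) * (0 - lam * (-Real.sin (Real.pi * x) * Real.pi))
        = (lam * Real.cos (Real.pi * x) - lam ^ 2) * Real.pi := by
      linear_combination (-lam ^ 2 * Real.pi) * hpyth
    have hdenom : 1 + (lam * Real.sin (Real.pi * x) / (1 - lam * Real.cos (Real.pi * x))) ^ 2
        = (1 - 2 * lam * Real.cos (Real.pi * x) + lam ^ 2) /
          (1 - lam * Real.cos (Real.pi * x)) ^ 2 := by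
      field_simp
      linear_combination lam ^ 2 * hpyth
    simp only [Pi.div_apply]
    rw [hnum, hdenom]
    field_simp
    ring
  -- derivative > 1 pointwise
  have hgt1 : ∀ x : ℝ, 1 < 2 * (1 - lam * Real.cos (Real.pi * x)) /
      (1 - 2 * lam * Real.cos (Real.pi * x) + lam ^ 2) := by
    intro x
    rw [lt_div_iff₀ (hDpos x)]
    nlinarith
  set F := fun y : ℝ => 2 * y + 1 + (2 / Real.pi) *
      Real.arctan (lam * Real.sin (Real.pi * y) / (1 - lam * Real.cos (Real.pi * y))) with hF
  have hmono : StrictMono F := by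
    apply strictMono_of_deriv_pos
    intro x
    rw [(key x).deriv]
    exact lt_trans one_pos (hgt1 x)
  have hcont : Continuous F := by
    rw [continuous_iff_continuousAt]
    exact fun x => (key x).continuousAt
  -- bounds on F for surjectivity
  have hbound : ∀ x : ℝ, 2 * x ≤ F x ∧ F x ≤ 2 * x + 2 := by
    intro x
    have ha := Real.arctan_mem_Ioo (lam * Real.sin (Real.pi * x) / (1 - lam * Real.cos (Real.pi * x)))
    obtain ⟨ha1, ha2⟩ := ha
    have h2π : 0 < 2 / Real.pi := by positivity
    have hb1 : (2 / Real.pi) * Real.arctan (lam * Real.sin (Real.pi * x) /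
        (1 - lam * Real.cos (Real.pi * x))) ≤ 1 := by
      have := mul_le_mul_of_nonneg_left (le_of_lt ha2) (le_of_lt h2π)
      calc (2 / Real.pi) * Real.arctan _ ≤ (2 / Real.pi) * (Real.pi / 2) := this
        _ = 1 := by field_simp
    have hb2 : (-1 : ℝ) ≤ (2 / Real.pi) * Real.arctan (lam * Real.sin (Real.pi * x) /
        (1 - lam * Real.cos (Real.pi * x))) := by
      have := mul_le_mul_of_nonneg_left (le_of_lt ha1) (le_of_lt h2π)
      calc (-1 : ℝ) = (2 / Real.pi) * (-(Real.pi / 2)) := by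
            field_simp
        _ ≤ _ := this
    constructor <;> simp only [hF] <;> linarith
  have hsurj : Function.Surjective F := by
    apply hcont.surjective
    · apply Filter.tendsto_atTop_mono (fun x => (hbound x).1)
      exact Filter.Tendsto.const_mul_atTop (by norm_num) Filter.tendsto_id
    · apply Filter.tendsto_atBot_mono (fun x => (hbound x).2)
      have h2x : Filter.Tendsto (fun x : ℝ => 2 * x) Filter.atBot Filter.atBot :=
        Filter.Tendsto.const_mul_atBot (by norm_num) Filter.tendsto_id
      exact Filter.tendsto_atBot_add_const_right _ _ h2x
  refine ⟨fun x => ⟨key x, hgt1 x⟩, hmono, ⟨hmono.injective, hsurj⟩, ?_⟩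
  -- uniform lower bound
  refine ⟨1 + (1 - lam ^ 2) / (1 + |lam|) ^ 2, ?_, ?_⟩
  · have : 0 < (1 - lam ^ 2) / (1 + |lam|) ^ 2 := by
      apply div_pos
      · nlinarith
      · positivity
    linarith
  · intro x
    have hD := hDpos x
    have heq : 2 * (1 - lam * Real.cos (Real.pi * x)) /
        (1 - 2 * lam * Real.cos (Real.pi * x) + lam ^ 2)
        = 1 + (1 - lam ^ 2) / (1 - 2 * lam * Real.cos (Real.pi * x) + lam ^ 2) := by
      field_simp
      ring
    rw [heq]
    have hnum : (0:ℝ) ≤ 1 - lam ^ 2 := by nlinarith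
    have := div_le_div_of_nonneg_left hnum hD (hDle x)
    linarith
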